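/- Let G be a just-infinite group with a central subgroup of finite index. Then G is abelian, and if moreover G is finitely generated then G is isomorphic to the infinite cyclic group ℤ. -/

import Mathlib

open Subgroup
open scoped commutatorElement

/-- If the center has finite index, the commutator set is finite. -/
lemma finite_commutatorSet_of_center_finiteIndex {G : Type*} [Group G]
    [(Subgroup.center G).FiniteIndex] : Finite (commutatorSet G) := by
  set Z := Subgroup.center G
  let F : (G ⧸ Z) × (G ⧸ Z) → G := fun p =>
    Quotient.liftOn₂ p.1 p.2 (fun a b => ⁅a, b⁆) (by
      intro a₁ b₁ a₂ b₂ ha hb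
      have ha' : a₁⁻¹ * a₂ ∈ Z := QuotientGroup.leftRel_apply.mp ha
      have hb' : b₁⁻¹ * b₂ ∈ Z := QuotientGroup.leftRel_apply.mp hb
      rw [Subgroup.mem_center_iff] at ha' hb'
      have ea : a₂ = a₁ * (a₁⁻¹ * a₂) := by group
      have eb : b₂ = b₁ * (b₁⁻¹ * b₂) := by group
      set z := a₁⁻¹ * a₂ with hz
      set w := b₁⁻¹ * b₂ with hw
      simp only [commutatorElement_def]
      rw [ea, eb]
      symm
      calc a₁ * z * (b₁ * w) * (a₁ * z)⁻¹ * (b₁ * w)⁻¹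
          = a₁ * (z * b₁) * w * z⁻¹ * a₁⁻¹ * (w⁻¹ * b₁⁻¹) := by group
        _ = a₁ * (b₁ * z) * w * z⁻¹ * a₁⁻¹ * (w⁻¹ * b₁⁻¹) := by rw [ha' b₁]
        _ = a₁ * b₁ * (z * (w * z⁻¹)) * a₁⁻¹ * (w⁻¹ * b₁⁻¹) := by group
        _ = a₁ * b₁ * ((w * z⁻¹) * z) * a₁⁻¹ * (w⁻¹ * b₁⁻¹) := by rw [ha' (w * z⁻¹)]
        _ = a₁ * b₁ * (w * a₁⁻¹) * w⁻¹ * b₁⁻¹ := by group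
        _ = a₁ * b₁ * (a₁⁻¹ * w) * w⁻¹ * b₁⁻¹ := by rw [hb' a₁⁻¹]
        _ = a₁ * b₁ * a₁⁻¹ * b₁⁻¹ := by group)
  have hsub : commutatorSet G ⊆ Set.range F := by
    rintro c ⟨a, b, rfl⟩
    exact ⟨((a : G ⧸ Z), (b : G ⧸ Z)), rfl⟩
  exact (Set.finite_range F).subset hsub

theorem just_infinite_central_finite_index_abelian {G : Type*} [Group G]
    (hinf : Infinite G)
    (hji : ∀ N : Subgroup G, N.Normal → N ≠ ⊥ → N.FiniteIndex)
    (H : Subgroup G) (hcentral : H ≤ Subgroup.center G) (hindex : H.FiniteIndex) :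
    (∀ a b : G, a * b = b * a) ∧
    (Group.FG G → Nonempty (G ≃* Multiplicative ℤ)) := by
  haveI : (Subgroup.center G).FiniteIndex := Subgroup.finiteIndex_of_le hcentral
  haveI : Finite (commutatorSet G) := finite_commutatorSet_of_center_finiteIndex
  haveI hfin : Finite (_root_.commutator G) := inferInstance
  -- a finite subgroup of finite index forces G finite, contradiction
  have key : ∀ N : Subgroup G, Finite N → N.FiniteIndex → False := by
    intro N hN hNi
    have h := Subgroup.card_mul_index N
    have h3 : Nat.card G = 0 := Nat.card_eq_zero_of_infinite
    rw [h3] at h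
    exact (mul_ne_zero Nat.card_pos.ne' hNi.index_ne_zero) h
  have hbot : _root_.commutator G = ⊥ := by
    by_contra hne
    exact key _ hfin (hji _ (Subgroup.commutator_normal ⊤ ⊤) hne)
  have hcomm : ∀ a b : G, a * b = b * a := by
    intro a b
    have : ⁅a, b⁆ ∈ _root_.commutator G :=
      Subgroup.commutator_mem_commutator (Subgroup.mem_top a) (Subgroup.mem_top b)
    rw [hbot, Subgroup.mem_bot] at this
    exact commutatorElement_eq_one_iff_mul_comm.mp this
  refine ⟨hcomm, ?_⟩
  intro hfg
  haveI : Group.FG G := hfg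
  letI cg : CommGroup G := { (inferInstance : Group G) with mul_comm := hcomm }
  have hnormal : ∀ N : Subgroup G, N.Normal := fun N =>
    ⟨fun n hn g => by rw [hcomm g n]; simpa using hn⟩
  -- torsion-free
  have htf : ∀ g : G, g ≠ 1 → ∀ n : ℤ, g ^ n = 1 → n = 0 := by
    intro g hg n hgn
    by_contra hn
    have hne : Subgroup.zpowers g ≠ ⊥ := by simp [Subgroup.zpowers_eq_bot, hg]
    have hidx := hji _ (hnormal _) hne
    have hfo : IsOfFinOrder g := by
      rcases lt_trichotomy n 0 with h | h | h
      · exact isOfFinOrder_iff_pow_eq_one.mpr ⟨(-n).toNat, by omega,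
          by rwa [← zpow_natCast, Int.toNat_of_nonneg (by omega), zpow_neg, inv_eq_one]⟩
      · exact absurd h hn
      · exact isOfFinOrder_iff_pow_eq_one.mpr ⟨n.toNat, by omega,
          by rwa [← zpow_natCast, Int.toNat_of_nonneg (by omega)]⟩
    exact key _ hfo.finite_zpowers.to_subtype hidx
  -- any two elements are dependent
  have hdep : ∀ a b : G, a ≠ 1 → ∃ n : ℤ, n ≠ 0 ∧ ∃ m : ℤ, b ^ n = a ^ m := by
    intro a b ha
    have hne : Subgroup.zpowers a ≠ ⊥ := by simp [Subgroup.zpowers_eq_bot, ha]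
    haveI hidx := hji _ (hnormal _) hne
    haveI : (Subgroup.zpowers a).Normal := hnormal _
    haveI : Finite (G ⧸ Subgroup.zpowers a) := inferInstance
    set k := Nat.card (G ⧸ Subgroup.zpowers a) with hk
    have hkpos : 0 < k := Nat.card_pos
    have : ((b ^ k : G) : G ⧸ Subgroup.zpowers a) = 1 := by
      rw [QuotientGroup.mk_pow]
      exact pow_card_eq_one'
    rw [QuotientGroup.eq_one_iff] at this
    obtain ⟨m, hm⟩ := Subgroup.mem_zpowers_iff.mp this
    exact ⟨(k : ℤ), by exact_mod_cast hkpos.ne', m, by rw [zpow_natCast]; exact hm.symm⟩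
  -- module structure on Additive G
  haveI : Module.Finite ℤ (Additive G) := Module.Finite.iff_addGroup_fg.mpr inferInstance
  haveI : NoZeroSMulDivisors ℤ (Additive G) := by
    constructor
    intro c x h
    by_cases hx : x = 0
    · exact Or.inr hx
    · refine Or.inl (htf x.toMul ?_ c ?_)
      · simpa using hx
      · simpa using congrArg Additive.toMul h
  haveI : Module.Free ℤ (Additive G) := Module.free_of_finite_type_torsion_free'
  set ι := Module.Free.ChooseBasisIndex ℤ (Additive G) with hι
  let b : Module.Basis ι ℤ (Additive G) := Module.Free.chooseBasis ℤ (Additive G)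
  haveI : Nontrivial G := inferInstance
  have hne : Nonempty ι := by
    by_contra hempty
    haveI : IsEmpty ι := not_nonempty_iff.mp hempty
    haveI : Subsingleton (ι →₀ ℤ) := inferInstance
    have : Subsingleton (Additive G) := b.repr.toEquiv.subsingleton
    obtain ⟨x, y, hxy⟩ := (inferInstance : Nontrivial G)
    exact hxy (this.elim (Additive.ofMul x) (Additive.ofMul y))
  have hsub : Subsingleton ι := by
    constructor
    intro i j
    by_contra hij
    have hbi : b i ≠ 0 := b.ne_zero i
    have hbi1 : (b i).toMul ≠ 1 := by simpa using hbi
    obtain ⟨n, hn, m, hnm⟩ := hdep (b i).toMul (b j).toMul hbi1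
    -- n • b j = m • b i
    have heq : (n : ℤ) • b j = m • b i := by
      have := congrArg Additive.ofMul hnm
      simpa using this
    have := congrArg (fun x => (b.repr x) j) heq
    simp only [map_zsmul, Module.Basis.repr_self, Finsupp.smul_apply, Finsupp.single_eq_same,
      Finsupp.single_apply] at this
    rw [if_neg hij] at this
    simp at this
    exact hn this
  haveI : Unique ι := @Unique.mk' ι ⟨hne.some⟩ hsub
  exact ⟨AddEquiv.toMultiplicativeLeft (b.repr.toAddEquiv.trans AddEquiv.finsuppUnique)⟩
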